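/- Let {v_k} be a sequence of nonnegative real numbers and {α_k}, {β_k} nonnegative real sequences with 0 ≤ α_k ≤ 1, v_{k+1} ≤ (1 − α_k) v_k + β_k for all k, ∑ α_k = ∞, ∑ β_k < ∞, and β_k/α_k → 0. Then v_k → 0. -/

import Mathlib

open Filter

/-- Polyak's lemma, deterministic version: If `v_k ≥ 0`,
`0 ≤ α_k ≤ 1`, `β_k ≥ 0`, `v_{k+1} ≤ (1 − α_k) v_k + β_k`, `∑ α_k = ∞`,
`∑ β_k < ∞`, and `β_k/α_k → 0`, then `v_k → 0`. -/
theorem stmt7 (v α β : ℕ → ℝ)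
    (hv : ∀ k, 0 ≤ v k)
    (hα0 : ∀ k, 0 ≤ α k) (hα1 : ∀ k, α k ≤ 1) (hβ : ∀ k, 0 ≤ β k)
    (hrec : ∀ k, v (k + 1) ≤ (1 - α k) * v k + β k)
    (hαdiv : ¬ Summable α)
    (hβsum : Summable β)
    (hratio : Tendsto (fun k => β k / α k) atTop (nhds 0)) :
    Tendsto v atTop (nhds 0) := by
  set T : ℕ → ℝ := fun i => ∑' k, β (k + i) with hTdef
  have hTsummable : ∀ i, Summable fun k => β (k + i) := fun i =>
    (summable_nat_add_iff i).2 hβsum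
  have hT0 : ∀ i, 0 ≤ T i := fun i => tsum_nonneg fun k => hβ _
  have hTrec : ∀ i, T i = β i + T (i+1) := by
    intro i
    have h := Summable.tsum_eq_zero_add (hTsummable i)
    simp only [hTdef]
    rw [h]
    congr 1
    · simp
    · exact tsum_congr fun k => by congr 1; omega
  have hTtend : Tendsto T atTop (nhds 0) := tendsto_sum_nat_add β
  set u : ℕ → ℝ := fun k => v k + T k with hu
  have hanti : Antitone u := antitone_nat_of_succ_le (by
    intro k
    have h1 := hrec k
    have h2 : 0 ≤ α k * v k := mul_nonneg (hα0 k) (hv k)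
    have h3 := hTrec k
    simp only [hu]
    nlinarith)
  have hbdd : BddBelow (Set.range u) :=
    ⟨0, by rintro x ⟨k, rfl⟩; exact add_nonneg (hv k) (hT0 k)⟩
  have hutend : Tendsto u atTop (nhds (⨅ i, u i)) := tendsto_atTop_ciInf hanti hbdd
  set L := ⨅ i, u i with hL
  have hvtend : Tendsto v atTop (nhds L) := by
    have h : Tendsto (fun k => u k - T k) atTop (nhds (L - 0)) := hutend.sub hTtend
    simpa [hu] using h
  have hL0 : 0 ≤ L := ge_of_tendsto' hvtend hv |>.trans_eq rfl
  rcases eq_or_lt_of_le hL0 with h | h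
  · rwa [← h] at hvtend
  · exfalso
    obtain ⟨N, hN⟩ : ∃ N, ∀ k ≥ N, L/2 ≤ v k := by
      have hev := hvtend.eventually (eventually_ge_nhds (by linarith : L/2 < L))
      exact Filter.eventually_atTop.1 hev
    set B := ∑' k, β k with hB
    have key : ∀ n, v (N + n) + (L/2) * ∑ k ∈ Finset.Ico N (N+n), α k
        ≤ v N + ∑ k ∈ Finset.Ico N (N+n), β k := by
      intro n
      induction n with
      | zero => simp
      | succ n ih =>
        have hvk := hN (N+n) (Nat.le_add_right _ _)
        have h1 := hrec (N+n)
        have hle : N ≤ N + n := Nat.le_add_right N n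
        have e1 : N + (n+1) = (N + n) + 1 := rfl
        rw [e1, Finset.sum_Ico_succ_top hle, Finset.sum_Ico_succ_top hle]
        have h2 : α (N+n) * (L/2) ≤ α (N+n) * v (N+n) :=
          mul_le_mul_of_nonneg_left hvk (hα0 _)
        nlinarith
    have hbound : ∀ n, ∑ k ∈ Finset.range n, α k
        ≤ ∑ k ∈ Finset.range N, α k + (2/L) * (v N + B) := by
      intro n
      have hsub : Finset.range n ⊆ Finset.range (N + n) := by
        apply Finset.range_subset_range.2; omega
      have h1 : ∑ k ∈ Finset.range n, α k ≤ ∑ k ∈ Finset.range (N+n), α k :=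
        Finset.sum_le_sum_of_subset_of_nonneg hsub (fun i _ _ => hα0 i)
      have h2 : ∑ k ∈ Finset.range (N+n), α k
          = ∑ k ∈ Finset.range N, α k + ∑ k ∈ Finset.Ico N (N+n), α k := by
        rw [Finset.range_eq_Ico, Finset.range_eq_Ico]
        exact (Finset.sum_Ico_consecutive α (Nat.zero_le N) (Nat.le_add_right N n)).symm
      have h3 : ∑ k ∈ Finset.Ico N (N+n), β k ≤ B :=
        Summable.sum_le_tsum _ (fun i _ => hβ i) hβsum
      have h4 := key n
      have h5 : (L/2) * ∑ k ∈ Finset.Ico N (N+n), α k ≤ v N + B := by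
        have := hv (N + n); linarith
      have h6 : ∑ k ∈ Finset.Ico N (N+n), α k ≤ (2/L) * (v N + B) := by
        rw [div_mul_eq_mul_div, le_div_iff₀ h]
        calc (∑ k ∈ Finset.Ico N (N+n), α k) * L
            = 2 * ((L/2) * ∑ k ∈ Finset.Ico N (N+n), α k) := by ring
          _ ≤ 2 * (v N + B) := by linarith
      linarith
    exact hαdiv (summable_of_sum_range_le hα0 hbound)
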